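/- The inner product function IP_{2k}(x₁,…,x_k,y₁,…,y_k) = ∑_{i=1}^k xᵢyᵢ over 𝔽₂ has nonlinearity exactly 2^{2k-1} − 2^{k-1}, i.e., it is bent. -/

import Mathlib

open Finset

/-- Nonlinearity of an `(n,1)`-function: `2^n` minus the maximal agreement
with an affine function `x ↦ ⟨a,x⟩ + b`. -/
noncomputable def NL (n : ℕ) (f : (Fin n → ZMod 2) → ZMod 2) : ℕ :=
  2 ^ n - Finset.univ.sup (fun ab : (Fin n → ZMod 2) × ZMod 2 =>
    Nat.card {x : Fin n → ZMod 2 | (∑ i, ab.1 i * x i) + ab.2 = f x})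

namespace IPbent

lemma zmod2_cases (a : ZMod 2) : a = 0 ∨ a = 1 := by revert a; decide

/-- fiber count of one linear form -/
def cnt (k : ℕ) (v : Fin k → ZMod 2) (c : ZMod 2) : ℕ :=
  (univ.filter fun u : Fin k → ZMod 2 => ∑ i, u i * v i = c).card

lemma sum_single_mul (k : ℕ) (v : Fin k → ZMod 2) (j : Fin k) :
    ∑ i, (Pi.single j 1 : Fin k → ZMod 2) i * v i = v j := by
  rw [Fintype.sum_eq_single j]
  · simp
  · intro i hi; simp [Pi.single_eq_of_ne hi]

lemma cnt_step (k : ℕ) (v : Fin k → ZMod 2) (j : Fin k) (hj : v j = 1) (c : ZMod 2) :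
    cnt k v c = cnt k v (c + 1) := by
  have hsum : ∀ u : Fin k → ZMod 2,
      ∑ i, (u + (Pi.single j 1 : Fin k → ZMod 2)) i * v i = (∑ i, u i * v i) + 1 := by
    intro u
    have : ∀ i, (u + (Pi.single j 1 : Fin k → ZMod 2)) i * v i = u i * v i + (Pi.single j 1 : Fin k → ZMod 2) i * v i := by
      intro i; simp [add_mul]
    rw [Fintype.sum_congr _ _ this, Finset.sum_add_distrib, sum_single_mul k v j, hj]
  have hinv : ∀ u : Fin k → ZMod 2, u + (Pi.single j 1 : Fin k → ZMod 2) + (Pi.single j 1 : Fin k → ZMod 2) = u := by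
    intro u; funext i
    have : ∀ a b : ZMod 2, a + b + b = a := by decide
    simp [this]
  apply Finset.card_nbij' (fun u => u + (Pi.single j 1 : Fin k → ZMod 2)) (fun u => u + (Pi.single j 1 : Fin k → ZMod 2))
  · intro u hu
    simp only [Finset.mem_coe, mem_filter, mem_univ, true_and] at hu ⊢
    rw [hsum, hu]
  · intro u hu
    simp only [Finset.mem_coe, mem_filter, mem_univ, true_and] at hu ⊢
    rw [hsum, hu]
    have : ∀ c : ZMod 2, c + 1 + 1 = c := by decide
    exact this c
  · intro u _; exact hinv u
  · intro u _; exact hinv u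

lemma cnt_ne_zero (k : ℕ) (v : Fin k → ZMod 2) (hv : v ≠ 0) (c : ZMod 2) :
    cnt k v c = 2 ^ (k - 1) := by
  obtain ⟨j, hj⟩ : ∃ j, v j ≠ 0 := by
    by_contra h
    push_neg at h
    exact hv (funext fun i => h i)
  have hj1 : v j = 1 := by
    rcases zmod2_cases (v j) with h | h
    · exact absurd h hj
    · exact h
  have h01 : cnt k v 0 = cnt k v 1 := by
    have := cnt_step k v j hj1 0
    simpa using this
  have hsum : cnt k v 0 + cnt k v 1 = 2 ^ k := by
    have hpart := Finset.card_filter_add_card_filter_not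
      (s := (univ : Finset (Fin k → ZMod 2))) (p := fun u => ∑ i, u i * v i = 0)
    have heq : (univ.filter fun u : Fin k → ZMod 2 => ¬ (∑ i, u i * v i = 0)) =
        (univ.filter fun u : Fin k → ZMod 2 => ∑ i, u i * v i = 1) := by
      apply Finset.filter_congr
      intro u _
      rcases zmod2_cases (∑ i, u i * v i) with h | h <;> simp [h]
    rw [heq] at hpart
    have hcard : (univ : Finset (Fin k → ZMod 2)).card = 2 ^ k := by
      simp [Finset.card_univ]
    rw [hcard] at hpart
    exact hpart
  have hk : 1 ≤ k := j.pos
  have hpow : 2 ^ k = 2 * 2 ^ (k - 1) := by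
    conv_lhs => rw [← Nat.sub_add_cancel hk]
    rw [pow_succ]; ring
  rcases zmod2_cases c with h | h <;> subst h <;> omega

lemma cnt_zero (k : ℕ) (c : ZMod 2) :
    cnt k 0 c = if c = 0 then 2 ^ k else 0 := by
  unfold cnt
  rcases zmod2_cases c with h | h <;> subst h
  · simp [Finset.card_univ]
  · have : ∀ u : Fin k → ZMod 2, ¬ ((∑ i, u i * (0 : Fin k → ZMod 2) i) = 1) := by
      intro u; simp
    simp only [this, Finset.filter_false]
    simp

/-- pair count -/
def Pcnt (k : ℕ) (c : ZMod 2) : ℕ :=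
  (univ.filter fun uv : (Fin k → ZMod 2) × (Fin k → ZMod 2) =>
    ∑ i, uv.1 i * uv.2 i = c).card

lemma Pcnt_eq_sum (k : ℕ) (c : ZMod 2) :
    Pcnt k c = ∑ v : Fin k → ZMod 2, cnt k v c := by
  unfold Pcnt cnt
  rw [Finset.card_filter]
  rw [← Finset.univ_product_univ, Finset.sum_product_right]
  refine Finset.sum_congr rfl fun v _ => ?_
  rw [Finset.card_filter]

lemma Pcnt_val (k : ℕ) (c : ZMod 2) :
    Pcnt k c = (if c = 0 then 2 ^ k else 0) + (2 ^ k - 1) * 2 ^ (k - 1) := by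
  rw [Pcnt_eq_sum]
  rw [← Finset.add_sum_erase _ _ (Finset.mem_univ (0 : Fin k → ZMod 2))]
  congr 1
  · exact cnt_zero k c
  · rw [Finset.sum_congr rfl (fun v hv => cnt_ne_zero k v (Finset.mem_erase.mp hv).1 c)]
    rw [Finset.sum_const, smul_eq_mul]
    congr 1
    rw [Finset.card_erase_of_mem (Finset.mem_univ _)]
    simp [Finset.card_univ]

/-- the equivalence between pairs and concatenated vectors -/
def appE (k : ℕ) : ((Fin k → ZMod 2) × (Fin k → ZMod 2)) ≃ (Fin (k + k) → ZMod 2) :=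
  (Equiv.sumArrowEquivProdArrow _ _ _).symm.trans
    (Equiv.arrowCongr finSumFinEquiv (Equiv.refl _))

lemma appE_castAdd (k : ℕ) (u v : Fin k → ZMod 2) (i : Fin k) :
    appE k (u, v) (Fin.castAdd k i) = u i := by
  simp only [appE, Equiv.sumArrowEquivProdArrow, Equiv.arrowCongr, Equiv.trans_apply,
    Equiv.coe_fn_mk, Equiv.coe_fn_symm_mk, Function.comp_apply, Equiv.refl_apply,
    finSumFinEquiv_symm_apply_castAdd, Sum.elim_inl]

lemma appE_natAdd (k : ℕ) (u v : Fin k → ZMod 2) (i : Fin k) :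
    appE k (u, v) (Fin.natAdd k i) = v i := by
  simp only [appE, Equiv.sumArrowEquivProdArrow, Equiv.arrowCongr, Equiv.trans_apply,
    Equiv.coe_fn_mk, Equiv.coe_fn_symm_mk, Function.comp_apply, Equiv.refl_apply,
    finSumFinEquiv_symm_apply_natAdd, Sum.elim_inr]

lemma agree (k : ℕ) (a : Fin (k + k) → ZMod 2) (b : ZMod 2) :
    Nat.card {x : Fin (k + k) → ZMod 2 |
        (∑ i, a i * x i) + b = ∑ i : Fin k, x (Fin.castAdd k i) * x (Fin.natAdd k i)} =
      Pcnt k (b + ∑ i : Fin k, a (Fin.castAdd k i) * a (Fin.natAdd k i)) := by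
  classical
  set a1 : Fin k → ZMod 2 := fun i => a (Fin.castAdd k i) with ha1
  set a2 : Fin k → ZMod 2 := fun i => a (Fin.natAdd k i) with ha2
  -- the composed change of variables
  let E : ((Fin k → ZMod 2) × (Fin k → ZMod 2)) ≃ (Fin (k + k) → ZMod 2) :=
    ((Equiv.addRight a2).prodCongr (Equiv.addRight a1)).trans (appE k)
  have key : ∀ uv : (Fin k → ZMod 2) × (Fin k → ZMod 2),
      (∑ i, uv.1 i * uv.2 i = b + ∑ i, a1 i * a2 i) ↔
      ((∑ i, a i * (E uv) i) + b =
        ∑ i : Fin k, (E uv) (Fin.castAdd k i) * (E uv) (Fin.natAdd k i)) := by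
    rintro ⟨u, v⟩
    have hE1 : ∀ i, (E (u, v)) (Fin.castAdd k i) = u i + a2 i := by
      intro i
      show appE k (u + a2, v + a1) (Fin.castAdd k i) = u i + a2 i
      rw [appE_castAdd]; rfl
    have hE2 : ∀ i, (E (u, v)) (Fin.natAdd k i) = v i + a1 i := by
      intro i
      show appE k (u + a2, v + a1) (Fin.natAdd k i) = v i + a1 i
      rw [appE_natAdd]; rfl
    rw [Fin.sum_univ_add (f := fun i => a i * (E (u, v)) i)]
    simp only [hE1, hE2, ← ha1, ← ha2]
    have expand1 : ∑ i, a1 i * (u i + a2 i) =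
        (∑ i, a1 i * u i) + ∑ i, a1 i * a2 i := by
      rw [← Finset.sum_add_distrib]
      exact Finset.sum_congr rfl fun i _ => by ring
    have expand2 : ∑ i, a2 i * (v i + a1 i) =
        (∑ i, a2 i * v i) + ∑ i, a1 i * a2 i := by
      rw [← Finset.sum_add_distrib]
      exact Finset.sum_congr rfl fun i _ => by ring
    have expand3 : ∑ i, (u i + a2 i) * (v i + a1 i) =
        (((∑ i, u i * v i) + ∑ i, a1 i * u i) + ∑ i, a2 i * v i) + ∑ i, a1 i * a2 i := by
      rw [← Finset.sum_add_distrib, ← Finset.sum_add_distrib, ← Finset.sum_add_distrib]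
      exact Finset.sum_congr rfl fun i _ => by ring
    rw [expand1, expand2, expand3]
    have : ∀ A B C D b : ZMod 2,
        (A = b + D) ↔ ((B + D) + (C + D) + b = ((A + B) + C) + D) := by decide
    exact this _ _ _ _ _
  have : Nat.card {uv : (Fin k → ZMod 2) × (Fin k → ZMod 2) |
      ∑ i, uv.1 i * uv.2 i = b + ∑ i, a1 i * a2 i} =
      Nat.card {x : Fin (k + k) → ZMod 2 |
        (∑ i, a i * x i) + b = ∑ i : Fin k, x (Fin.castAdd k i) * x (Fin.natAdd k i)} :=
    Nat.card_congr (Equiv.subtypeEquiv E key)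
  rw [← this]
  rw [Nat.card_eq_fintype_card]
  rw [Fintype.card_subtype]
  rfl

end IPbent

open IPbent

/-- The inner product function on 2k variables is bent: its nonlinearity is
exactly 2^(2k-1) - 2^(k-1). -/
theorem inner_product_is_bent (k : ℕ) :
    NL (k + k) (fun x => ∑ i : Fin k, x (Fin.castAdd k i) * x (Fin.natAdd k i)) =
      2 ^ (k + k - 1) - 2 ^ (k - 1) := by
  have hP1le : Pcnt k 1 ≤ Pcnt k 0 := by
    rw [Pcnt_val, Pcnt_val]
    simp
  have hsup : (Finset.univ.sup (fun ab : (Fin (k+k) → ZMod 2) × ZMod 2 =>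
      Nat.card {x : Fin (k+k) → ZMod 2 | (∑ i, ab.1 i * x i) + ab.2 =
        ∑ i : Fin k, x (Fin.castAdd k i) * x (Fin.natAdd k i)})) = Pcnt k 0 := by
    apply le_antisymm
    · apply Finset.sup_le
      rintro ⟨a, b⟩ _
      rw [agree k a b]
      rcases zmod2_cases (b + ∑ i : Fin k, a (Fin.castAdd k i) * a (Fin.natAdd k i)) with h | h
      · rw [h]
      · rw [h]; exact hP1le
    · have harg : (0 : ZMod 2) + ∑ i : Fin k,
          (0 : Fin (k+k) → ZMod 2) (Fin.castAdd k i) * (0 : Fin (k+k) → ZMod 2) (Fin.natAdd k i)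
          = 0 := by simp
      have h00 := agree k 0 0
      rw [harg] at h00
      refine le_trans (le_of_eq ?_) (Finset.le_sup (f := fun ab : (Fin (k+k) → ZMod 2) × ZMod 2 =>
        Nat.card {x : Fin (k+k) → ZMod 2 | (∑ i, ab.1 i * x i) + ab.2 =
          ∑ i : Fin k, x (Fin.castAdd k i) * x (Fin.natAdd k i)})
        (Finset.mem_univ ((0 : Fin (k+k) → ZMod 2), (0 : ZMod 2))))
      exact h00.symm
  unfold NL
  rw [hsup, Pcnt_val]
  rw [if_pos rfl]
  clear hsup hP1le
  rcases Nat.eq_zero_or_pos k with hk | hk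
  · subst hk; simp
  · have hpow1 : 2 ^ k = 2 * 2 ^ (k - 1) := by
      conv_lhs => rw [← Nat.sub_add_cancel hk]
      rw [pow_succ]; ring
    have hpow2 : 2 ^ (k + k) = 4 * (2 ^ (k - 1) * 2 ^ (k - 1)) := by
      have : k + k = (k - 1) + (k - 1) + 2 := by omega
      rw [this, pow_add, pow_add]; ring
    have hpow3 : 2 ^ (k + k - 1) = 2 * (2 ^ (k - 1) * 2 ^ (k - 1)) := by
      have : k + k - 1 = (k - 1) + (k - 1) + 1 := by omega
      rw [this, pow_add, pow_add]; ring
    have hN : 1 ≤ 2 ^ (k - 1) := Nat.one_le_two_pow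
    rw [hpow1, hpow2, hpow3]
    generalize 2 ^ (k - 1) = N at *
    have hsub : (2 * N - 1) * N = 2 * (N * N) - N := by
      rw [Nat.sub_mul]; ring_nf
    rw [hsub]
    generalize N * N = Q at *
    omega
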